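/- arXiv:math/0609790 — 3 statements merged into one kernel-verified Lean document; each statement's English description precedes it below -/
import Mathlib

section
/- Let g be a Lie algebra graded by the Klein four-group with components g_e, g_a, g_b, g_c, and let U = [g_a,g_a] + [g_b,g_b] + [g_c,g_c]. Then I = U ⊕ g_a ⊕ g_b ⊕ g_c is an ideal of g. -/
/-- For a Lie algebra `L` graded by the Klein four-group
(`e = (0,0)`, `a = (1,0)`, `b = (0,1)`, `c = (1,1)` in `ZMod 2 × ZMod 2`),
with `U = [g_a,g_a] + [g_b,g_b] + [g_c,g_c]`, the subspace
`I = U ⊕ g_a ⊕ g_b ⊕ g_c` is an ideal of `L`. -/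
theorem klein_grading_ideal
    (k : Type*) [Field k] (L : Type*) [LieRing L] [LieAlgebra k L]
    (g : ZMod 2 × ZMod 2 → Submodule k L)
    (hdecomp : DirectSum.IsInternal g)
    (hgrad : ∀ γ₁ γ₂, ∀ x ∈ g γ₁, ∀ y ∈ g γ₂, ⁅x, y⁆ ∈ g (γ₁ + γ₂))
    (U I : Submodule k L)
    (hU : U = Submodule.span k {z : L | ∃ x ∈ g (1,0), ∃ y ∈ g (1,0), z = ⁅x, y⁆} ⊔
      Submodule.span k {z : L | ∃ x ∈ g (0,1), ∃ y ∈ g (0,1), z = ⁅x, y⁆} ⊔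
      Submodule.span k {z : L | ∃ x ∈ g (1,1), ∃ y ∈ g (1,1), z = ⁅x, y⁆})
    (hI : I = U ⊔ g (1,0) ⊔ g (0,1) ⊔ g (1,1)) :
    ∀ x : L, ∀ y ∈ I, ⁅x, y⁆ ∈ I := by
  -- U ≤ I and each nonzero homogeneous piece ≤ I
  have hIU : U ≤ I := by
    rw [hI]; exact le_sup_of_le_left (le_sup_of_le_left le_sup_left)
  have hne : ∀ δ : ZMod 2 × ZMod 2, δ ≠ 0 → g δ ≤ I := by
    intro δ hδ
    have h3 : δ = (1,0) ∨ δ = (0,1) ∨ δ = (1,1) := by revert hδ; revert δ; decide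
    rcases h3 with h | h | h <;> subst h <;> rw [hI]
    · exact le_sup_of_le_left (le_sup_of_le_left le_sup_right)
    · exact le_sup_of_le_left le_sup_right
    · exact le_sup_right
  -- brackets of two elements of the same nonzero piece lie in U
  have hgen : ∀ α : ZMod 2 × ZMod 2, α = (1,0) ∨ α = (0,1) ∨ α = (1,1) →
      ∀ u ∈ g α, ∀ v ∈ g α, ⁅u, v⁆ ∈ U := by
    intro α hα u hu v hv
    rw [hU]
    rcases hα with h | h | h <;> subst h
    · exact Submodule.mem_sup_left (Submodule.mem_sup_left (Submodule.subset_span ⟨u, hu, v, hv, rfl⟩))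
    · exact Submodule.mem_sup_left (Submodule.mem_sup_right (Submodule.subset_span ⟨u, hu, v, hv, rfl⟩))
    · exact Submodule.mem_sup_right (Submodule.subset_span ⟨u, hu, v, hv, rfl⟩)
  -- key: homogeneous x
  have key : ∀ γ : ZMod 2 × ZMod 2, ∀ x ∈ g γ, ∀ y ∈ I, ⁅x, y⁆ ∈ I := by
    intro γ x hx
    -- bracket with a nonzero homogeneous piece
    have piece : ∀ α : ZMod 2 × ZMod 2, α = (1,0) ∨ α = (0,1) ∨ α = (1,1) →
        ∀ y ∈ g α, ⁅x, y⁆ ∈ I := by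
      intro α hα y hy
      by_cases hγ : γ = α
      · subst hγ
        exact hIU (hgen γ hα x hx y hy)
      · have hsum : γ + α ≠ 0 := by
          intro h
          apply hγ
          have : γ = γ + α + α := by
            have : α + α = 0 := by
              rcases hα with h | h | h <;> subst h <;> decide
            rw [add_assoc, this, add_zero]
          rw [this, h, zero_add]
        exact hne _ hsum (hgrad γ α x hx y hy)
    -- bracket with a generator of U
    have genU : ∀ α : ZMod 2 × ZMod 2, α = (1,0) ∨ α = (0,1) ∨ α = (1,1) →
        ∀ u ∈ g α, ∀ v ∈ g α, ⁅x, ⁅u, v⁆⁆ ∈ I := by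
      intro α hα u hu v hv
      by_cases hγ : γ = 0
      · subst hγ
        rw [leibniz_lie]
        have h1 : ⁅x, u⁆ ∈ g α := by
          have := hgrad 0 α x hx u hu
          rwa [zero_add] at this
        have h2 : ⁅x, v⁆ ∈ g α := by
          have := hgrad 0 α x hx v hv
          rwa [zero_add] at this
        exact I.add_mem (hIU (hgen α hα ⁅x, u⁆ h1 v hv)) (hIU (hgen α hα u hu ⁅x, v⁆ h2))
      · have huv : ⁅u, v⁆ ∈ g 0 := by
          have h0 : α + α = 0 := by
            rcases hα with h | h | h <;> subst h <;> decide
          have := hgrad α α u hu v hv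
          rwa [h0] at this
        have := hgrad γ 0 x hx ⁅u, v⁆ huv
        rw [add_zero] at this
        exact hne γ hγ this
    intro y hy
    have step : I ≤ Submodule.comap (LieAlgebra.ad k L x) I := by
      conv_lhs => rw [hI]
      refine sup_le (sup_le (sup_le ?_ ?_) ?_) ?_
      · conv_lhs => rw [hU]
        refine sup_le (sup_le ?_ ?_) ?_ <;> rw [Submodule.span_le]
        · rintro z ⟨u, hu, v, hv, rfl⟩
          simpa [Submodule.mem_comap, LieAlgebra.ad_apply] using
            genU (1,0) (Or.inl rfl) u hu v hv
        · rintro z ⟨u, hu, v, hv, rfl⟩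
          simpa [Submodule.mem_comap, LieAlgebra.ad_apply] using
            genU (0,1) (Or.inr (Or.inl rfl)) u hu v hv
        · rintro z ⟨u, hu, v, hv, rfl⟩
          simpa [Submodule.mem_comap, LieAlgebra.ad_apply] using
            genU (1,1) (Or.inr (Or.inr rfl)) u hu v hv
      · intro w hw
        simpa [Submodule.mem_comap, LieAlgebra.ad_apply] using
          piece (1,0) (Or.inl rfl) w hw
      · intro w hw
        simpa [Submodule.mem_comap, LieAlgebra.ad_apply] using
          piece (0,1) (Or.inr (Or.inl rfl)) w hw
      · intro w hw
        simpa [Submodule.mem_comap, LieAlgebra.ad_apply] using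
          piece (1,1) (Or.inr (Or.inr rfl)) w hw
    simpa [Submodule.mem_comap, LieAlgebra.ad_apply] using step hy
  intro x y hy
  have hx : x ∈ ⨆ γ, g γ := by
    rw [hdecomp.submodule_iSup_eq_top]; trivial
  refine Submodule.iSup_induction g (motive := fun x => ⁅x, y⁆ ∈ I) hx
    (fun γ z hz => key γ z hz y hy) ?_ ?_
  · show ⁅(0 : L), y⁆ ∈ I
    rw [zero_lie]; exact I.zero_mem
  · intro u v hu hv
    show ⁅u + v, y⁆ ∈ I
    rw [add_lie]; exact I.add_mem hu hv
end

section
/- Let B be a symmetric bilinear form on the subspace m = g_a ⊕ g_b ⊕ g_c of so(5) (with g_a = span{A₁,A₂,A₃,A₄}, g_b = span{B₁,B₂}, g_c = span{C₁,C₂}) satisfying B([X,Y],Z) + B(Y,[X,Z]) = 0 for all X ∈ g_e = span{X₁,X₂} and Y, Z ∈ m, and such that g_a, g_b, g_c are pairwise B-orthogonal. Then there exist real numbers t, u, v, w with B = t(α₁²+α₂²+α₃²+α₄²) + u(α₁α₄ − α₂α₃) + v(β₁²+β₂²) + w(γ₁²+γ₂²), where {αᵢ, βᵢ, γᵢ}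 is the dual basis of {Aᵢ, Bᵢ, Cᵢ}. -/
open Matrix

/-- Elementary skew-symmetric matrix: `1` at `(i,j)`, `-1` at `(j,i)` (0-based indices). -/
def E (i j : Fin 5) : Matrix (Fin 5) (Fin 5) ℝ :=
  Matrix.single i j 1 - Matrix.single j i 1

/-- `g_e = span{X₁ = E 0 1, X₂ = E 2 3}`. -/
noncomputable def ge : Submodule ℝ (Matrix (Fin 5) (Fin 5) ℝ) :=
  Submodule.span ℝ {E 0 1, E 2 3}

/-- `g_a = span{A₁ = E 0 2, A₂ = E 0 3, A₃ = E 1 2, A₄ = E 1 3}`. -/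
noncomputable def ga : Submodule ℝ (Matrix (Fin 5) (Fin 5) ℝ) :=
  Submodule.span ℝ {E 0 2, E 0 3, E 1 2, E 1 3}

/-- `g_b = span{B₁ = E 0 4, B₂ = E 1 4}`. -/
noncomputable def gb : Submodule ℝ (Matrix (Fin 5) (Fin 5) ℝ) :=
  Submodule.span ℝ {E 0 4, E 1 4}

/-- `g_c = span{C₁ = E 2 4, C₂ = E 3 4}`. -/
noncomputable def gc : Submodule ℝ (Matrix (Fin 5) (Fin 5) ℝ) :=
  Submodule.span ℝ {E 2 4, E 3 4}

lemma brXA1 : ⁅E 0 1, E 0 2⁆ = -(E 1 2) := by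
  ext i j; fin_cases i <;> fin_cases j <;>
    simp [E, Ring.lie_def, Matrix.mul_apply, Matrix.single, Fin.sum_univ_five]

lemma brXA2 : ⁅E 0 1, E 0 3⁆ = -(E 1 3) := by
  ext i j; fin_cases i <;> fin_cases j <;>
    simp [E, Ring.lie_def, Matrix.mul_apply, Matrix.single, Fin.sum_univ_five]

lemma brXA3 : ⁅E 0 1, E 1 2⁆ = E 0 2 := by
  ext i j; fin_cases i <;> fin_cases j <;>
    simp [E, Ring.lie_def, Matrix.mul_apply, Matrix.single, Fin.sum_univ_five]

lemma brXA4 : ⁅E 0 1, E 1 3⁆ = E 0 3 := by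
  ext i j; fin_cases i <;> fin_cases j <;>
    simp [E, Ring.lie_def, Matrix.mul_apply, Matrix.single, Fin.sum_univ_five]

lemma brYA1 : ⁅E 2 3, E 0 2⁆ = -(E 0 3) := by
  ext i j; fin_cases i <;> fin_cases j <;>
    simp [E, Ring.lie_def, Matrix.mul_apply, Matrix.single, Fin.sum_univ_five]

lemma brYA2 : ⁅E 2 3, E 0 3⁆ = E 0 2 := by
  ext i j; fin_cases i <;> fin_cases j <;>
    simp [E, Ring.lie_def, Matrix.mul_apply, Matrix.single, Fin.sum_univ_five]

lemma brYA3 : ⁅E 2 3, E 1 2⁆ = -(E 1 3) := by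
  ext i j; fin_cases i <;> fin_cases j <;>
    simp [E, Ring.lie_def, Matrix.mul_apply, Matrix.single, Fin.sum_univ_five]

lemma brYA4 : ⁅E 2 3, E 1 3⁆ = E 1 2 := by
  ext i j; fin_cases i <;> fin_cases j <;>
    simp [E, Ring.lie_def, Matrix.mul_apply, Matrix.single, Fin.sum_univ_five]

lemma brXB1 : ⁅E 0 1, E 0 4⁆ = -(E 1 4) := by
  ext i j; fin_cases i <;> fin_cases j <;>
    simp [E, Ring.lie_def, Matrix.mul_apply, Matrix.single, Fin.sum_univ_five]

lemma brXB2 : ⁅E 0 1, E 1 4⁆ = E 0 4 := by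
  ext i j; fin_cases i <;> fin_cases j <;>
    simp [E, Ring.lie_def, Matrix.mul_apply, Matrix.single, Fin.sum_univ_five]

lemma brYC1 : ⁅E 2 3, E 2 4⁆ = -(E 3 4) := by
  ext i j; fin_cases i <;> fin_cases j <;>
    simp [E, Ring.lie_def, Matrix.mul_apply, Matrix.single, Fin.sum_univ_five]

lemma brYC2 : ⁅E 2 3, E 3 4⁆ = E 2 4 := by
  ext i j; fin_cases i <;> fin_cases j <;>
    simp [E, Ring.lie_def, Matrix.mul_apply, Matrix.single, Fin.sum_univ_five]

/-- Any symmetric bilinear form `B` on `m = g_a ⊕ g_b ⊕ g_c ⊆ so(5)` which is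
`ad(g_e)`-invariant and for which `g_a, g_b, g_c` are pairwise orthogonal is of the form
`B = t(α₁²+α₂²+α₃²+α₄²) + u(α₁α₄ - α₂α₃) + v(β₁²+β₂²) + w(γ₁²+γ₂²)`;
equivalently, its values on the basis `{A₁,A₂,A₃,A₄,B₁,B₂,C₁,C₂}` are as listed below. -/
theorem invariant_form_on_flag_so5
    (B : Matrix (Fin 5) (Fin 5) ℝ →ₗ[ℝ] Matrix (Fin 5) (Fin 5) ℝ →ₗ[ℝ] ℝ)
    (hsym : ∀ X Y, B X Y = B Y X)
    (hinv : ∀ X ∈ ge, ∀ Y ∈ ga ⊔ gb ⊔ gc, ∀ Z ∈ ga ⊔ gb ⊔ gc,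
      B ⁅X, Y⁆ Z + B Y ⁅X, Z⁆ = 0)
    (hab : ∀ X ∈ ga, ∀ Y ∈ gb, B X Y = 0)
    (hac : ∀ X ∈ ga, ∀ Y ∈ gc, B X Y = 0)
    (hbc : ∀ X ∈ gb, ∀ Y ∈ gc, B X Y = 0) :
    ∃ t u v w : ℝ,
      B (E 0 2) (E 0 2) = t ∧ B (E 0 3) (E 0 3) = t ∧
      B (E 1 2) (E 1 2) = t ∧ B (E 1 3) (E 1 3) = t ∧
      B (E 0 2) (E 1 3) = u ∧ B (E 0 3) (E 1 2) = -u ∧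
      B (E 0 2) (E 0 3) = 0 ∧ B (E 0 2) (E 1 2) = 0 ∧
      B (E 0 3) (E 1 3) = 0 ∧ B (E 1 2) (E 1 3) = 0 ∧
      B (E 0 4) (E 0 4) = v ∧ B (E 1 4) (E 1 4) = v ∧ B (E 0 4) (E 1 4) = 0 ∧
      B (E 2 4) (E 2 4) = w ∧ B (E 3 4) (E 3 4) = w ∧ B (E 2 4) (E 3 4) = 0 := by

  -- membership facts
  have hX1 : E 0 1 ∈ ge := Submodule.subset_span (by simp)
  have hX2 : E 2 3 ∈ ge := Submodule.subset_span (by simp)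
  have hA1 : E 0 2 ∈ ga ⊔ gb ⊔ gc :=
    Submodule.mem_sup_left (Submodule.mem_sup_left (Submodule.subset_span (by simp)))
  have hA2 : E 0 3 ∈ ga ⊔ gb ⊔ gc :=
    Submodule.mem_sup_left (Submodule.mem_sup_left (Submodule.subset_span (by simp)))
  have hA3 : E 1 2 ∈ ga ⊔ gb ⊔ gc :=
    Submodule.mem_sup_left (Submodule.mem_sup_left (Submodule.subset_span (by simp)))
  have hA4 : E 1 3 ∈ ga ⊔ gb ⊔ gc :=
    Submodule.mem_sup_left (Submodule.mem_sup_left (Submodule.subset_span (by simp)))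
  have hB1 : E 0 4 ∈ ga ⊔ gb ⊔ gc :=
    Submodule.mem_sup_left (Submodule.mem_sup_right (Submodule.subset_span (by simp)))
  have hB2 : E 1 4 ∈ ga ⊔ gb ⊔ gc :=
    Submodule.mem_sup_left (Submodule.mem_sup_right (Submodule.subset_span (by simp)))
  have hC1 : E 2 4 ∈ ga ⊔ gb ⊔ gc :=
    Submodule.mem_sup_right (Submodule.subset_span (by simp))
  have hC2 : E 3 4 ∈ ga ⊔ gb ⊔ gc :=
    Submodule.mem_sup_right (Submodule.subset_span (by simp))
  -- invariance instances, X = X₁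
  have h11 := hinv _ hX1 _ hA1 _ hA1
  have h22 := hinv _ hX1 _ hA2 _ hA2
  have h12 := hinv _ hX1 _ hA1 _ hA2
  have h13 := hinv _ hX1 _ hA1 _ hA3
  have h14 := hinv _ hX1 _ hA1 _ hA4
  have h24 := hinv _ hX1 _ hA2 _ hA4
  have hb11 := hinv _ hX1 _ hB1 _ hB1
  have hb12 := hinv _ hX1 _ hB1 _ hB2
  -- invariance instances, X = X₂
  have g11 := hinv _ hX2 _ hA1 _ hA1
  have g33 := hinv _ hX2 _ hA3 _ hA3
  have g12 := hinv _ hX2 _ hA1 _ hA2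
  have g34 := hinv _ hX2 _ hA3 _ hA4
  have gc11 := hinv _ hX2 _ hC1 _ hC1
  have gc12 := hinv _ hX2 _ hC1 _ hC2
  rw [brXA1] at h11 h12 h13 h14
  rw [brXA2] at h12 h22 h24
  rw [brXA3] at h13
  rw [brXA4] at h14 h24
  rw [brYA1] at g11 g12
  rw [brYA2] at g12
  rw [brYA3] at g33 g34
  rw [brYA4] at g34
  rw [brXB1] at hb11 hb12
  rw [brXB2] at hb12
  rw [brYC1] at gc11 gc12
  rw [brYC2] at gc12
  simp only [map_neg, LinearMap.neg_apply] at h11 h22 h12 h13 h14 h24 g11 g33 g12 g34 hb11 hb12 gc11 gc12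
  refine ⟨B (E 0 2) (E 0 2), B (E 0 2) (E 1 3), B (E 0 4) (E 0 4), B (E 2 4) (E 2 4),
    rfl, ?_, ?_, ?_, rfl, ?_, ?_, ?_, ?_, ?_, rfl, ?_, ?_, rfl, ?_, ?_⟩ <;>
  · have s1 := hsym (E 1 2) (E 0 2)
    have s2 := hsym (E 1 3) (E 0 3)
    have s3 := hsym (E 1 3) (E 0 2)
    have s4 := hsym (E 1 2) (E 0 3)
    have s5 := hsym (E 0 3) (E 0 2)
    have s6 := hsym (E 1 3) (E 1 2)
    have s7 := hsym (E 1 4) (E 0 4)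
    have s8 := hsym (E 3 4) (E 2 4)
    linarith
end

section
/- Let h = so(r₁) act on the space M(r₁, r₂) of r₁×r₂ real matrices by X · A = XA, with r₁ ≥ 3. If B is a symmetric bilinear form on M(r₁,r₂) that is invariant, i.e. B(XA, A') + B(A, XA') = 0 for all X ∈ so(r₁) and A, A' ∈ M(r₁,r₂), and also invariant under the right action of so(r₂) (B(AY, A') + B(A, A'Y) = 0), then B is a scalar multiple of the trace form B(A,A') = tr(Aᵀ A'). -/
open Matrix

lemma stdMulStd {m n p : Type*} [Fintype n] [DecidableEq m] [DecidableEq n] [DecidableEq p]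
    (a : m) (b i : n) (j : p) :
    Matrix.single a b (1:ℝ) * Matrix.single i j (1:ℝ) =
      if b = i then Matrix.single a j (1:ℝ) else 0 := by
  ext x y
  by_cases h : b = i <;>
    simp [h, mul_apply, Matrix.single, ite_and, Finset.sum_ite_eq, Finset.sum_ite_eq'] <;>
      split_ifs <;> simp_all

lemma skewStd {n : Type*} [DecidableEq n] (a b : n) :
    (Matrix.single a b (1:ℝ) - Matrix.single b a 1)ᵀ =
      -(Matrix.single a b (1:ℝ) - Matrix.single b a 1) := by
  ext x y
  simp only [transpose_apply, Matrix.sub_apply, Matrix.neg_apply, Matrix.single, of_apply]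
  by_cases h1 : a = x <;> by_cases h2 : b = y <;> by_cases h3 : a = y <;> by_cases h4 : b = x <;>
    simp [h1, h2, h3, h4, and_comm]


/-- Let `so(r₁)` act on the left and `so(r₂)` on the right of the space of `r₁ × r₂`
real matrices, with `r₁ ≥ 3`.  Any symmetric bilinear form `B` invariant under both
actions is a scalar multiple of the trace form `(A, A') ↦ tr (Aᵀ * A')`. -/
theorem invariant_form_is_trace_form
    (r₁ r₂ : ℕ) (hr₁ : 3 ≤ r₁)
    (B : Matrix (Fin r₁) (Fin r₂) ℝ →ₗ[ℝ] Matrix (Fin r₁) (Fin r₂) ℝ →ₗ[ℝ] ℝ)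
    (hsym : ∀ A A', B A A' = B A' A)
    (hleft : ∀ X : Matrix (Fin r₁) (Fin r₁) ℝ, Xᵀ = -X →
      ∀ A A', B (X * A) A' + B A (X * A') = 0)
    (hright : ∀ Y : Matrix (Fin r₂) (Fin r₂) ℝ, Yᵀ = -Y →
      ∀ A A', B (A * Y) A' + B A (A' * Y) = 0) :
    ∃ c : ℝ, ∀ A A', B A A' = c * Matrix.trace (Aᵀ * A') := by
  classical
  -- degenerate case `r₂ = 0`
  rcases Nat.eq_zero_or_pos r₂ with hr₂ | hr₂
  · subst hr₂
    refine ⟨0, fun A A' => ?_⟩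
    have hA : A = 0 := by ext i j; exact absurd j.2 (by omega)
    simp [hA]
  set f : Fin r₁ → Fin r₂ → Fin r₁ → Fin r₂ → ℝ :=
    fun i j k l => B (Matrix.single i j 1) (Matrix.single k l 1) with hfdef
  -- left invariance relation
  have relL : ∀ a b i : Fin r₁, ∀ j : Fin r₂, ∀ k : Fin r₁, ∀ l : Fin r₂,
      ((if b = i then f a j k l else 0) - (if a = i then f b j k l else 0)) +
      ((if b = k then f i j a l else 0) - (if a = k then f i j b l else 0)) = 0 := by
    intro a b i j k l
    have h := hleft _ (skewStd a b) (Matrix.single i j 1) (Matrix.single k l 1)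
    simp only [Matrix.sub_mul, stdMulStd, map_sub, LinearMap.sub_apply,
      apply_ite (fun M => B M (Matrix.single k l (1:ℝ))),
      apply_ite (B (Matrix.single i j (1:ℝ))),
      map_zero, LinearMap.zero_apply, LinearMap.map_zero] at h
    exact h
  -- right invariance relation
  have relR : ∀ i : Fin r₁, ∀ j : Fin r₂, ∀ k : Fin r₁, ∀ l c d : Fin r₂,
      ((if j = c then f i d k l else 0) - (if j = d then f i c k l else 0)) +
      ((if l = c then f i j k d else 0) - (if l = d then f i j k c else 0)) = 0 := by
    intro i j k l c d
    have h := hright _ (skewStd c d) (Matrix.single i j 1) (Matrix.single k l 1)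
    simp only [Matrix.mul_sub, stdMulStd, map_sub, LinearMap.sub_apply,
      apply_ite (fun M => B M (Matrix.single k l (1:ℝ))),
      apply_ite (B (Matrix.single i j (1:ℝ))),
      map_zero, LinearMap.zero_apply, LinearMap.map_zero] at h
    exact h
  -- claim 1 : off-diagonal in the first index vanishes
  have claim1 : ∀ (i : Fin r₁) (j : Fin r₂) (k : Fin r₁) (l : Fin r₂), i ≠ k → f i j k l = 0 := by
    intro i j k l hik
    obtain ⟨m, hmi, hmk⟩ : ∃ m : Fin r₁, m ≠ i ∧ m ≠ k := by
      have hne : (Finset.univ \ {i, k} : Finset (Fin r₁)).Nonempty := by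
        rw [Finset.sdiff_nonempty]
        intro hsub
        have h1 := Finset.card_le_card hsub
        have h2 : ({i, k} : Finset (Fin r₁)).card ≤ 2 :=
          le_trans (Finset.card_insert_le _ _) (by simp)
        simp [Finset.card_univ] at h1
        omega
      obtain ⟨m, hm⟩ := hne
      simp only [Finset.mem_sdiff, Finset.mem_univ, Finset.mem_insert, Finset.mem_singleton,
        true_and, not_or] at hm
      exact ⟨m, hm.1, hm.2⟩
    have h := relL i m m j k l
    simpa [hmi.symm, hmk, (hmi.symm : i ≠ m), hik, fun h' : m = k => hmk h'] using h
  -- claim 2 : diagonal (first index) independent of that index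
  have claim2 : ∀ (a b : Fin r₁) (j l : Fin r₂), f a j a l = f b j b l := by
    intro a b j l
    have h := relL a b a j b l
    rcases eq_or_ne a b with rfl | hab
    · rfl
    · simp [hab, Ne.symm hab] at h
      linarith
  -- claim 3 : off-diagonal in the second index vanishes
  have claim3 : ∀ (i : Fin r₁) (j l : Fin r₂), j ≠ l → f i j i l = 0 := by
    intro i j l hjl
    have hs : f i l i j = f i j i l := hsym _ _
    have h := relR i j i j j l
    simp [hjl] at h
    linarith
  -- claim 4 : the diagonal value is independent of the second index
  have claim4 : ∀ (i : Fin r₁) (j l : Fin r₂), f i j i j = f i l i l := by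
    intro i j l
    rcases eq_or_ne j l with rfl | hjl
    · rfl
    · have h := relR i j i l j l
      simp [hjl, hjl.symm] at h
      linarith
  set i₀ : Fin r₁ := ⟨0, by omega⟩
  set j₀ : Fin r₂ := ⟨0, hr₂⟩
  obtain ⟨c, hc⟩ : ∃ c : ℝ, f i₀ j₀ i₀ j₀ = c := ⟨_, rfl⟩
  refine ⟨c, fun A A' => ?_⟩
  have key : ∀ (i : Fin r₁) (j : Fin r₂) (k : Fin r₁) (l : Fin r₂),
      B (Matrix.single i j (1:ℝ)) (Matrix.single k l (1:ℝ)) =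
        if j = l ∧ i = k then c else 0 := by
    intro i j k l
    rcases eq_or_ne i k with rfl | hik
    · rcases eq_or_ne j l with rfl | hjl
      · rw [if_pos ⟨rfl, rfl⟩]
        exact (claim2 i i₀ j j).trans ((claim4 i₀ j j₀).trans hc)
      · rw [if_neg (by tauto)]
        exact claim3 i j l hjl
    · rw [if_neg (by tauto)]
      exact claim1 i j k l hik
  have expand : ∀ M : Matrix (Fin r₁) (Fin r₂) ℝ,
      M = ∑ i, ∑ j, M i j • Matrix.single i j (1:ℝ) := by
    intro M
    conv_lhs => rw [matrix_eq_sum_single M]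
    simp
  conv_lhs => rw [expand A, expand A']
  simp only [map_sum, LinearMap.sum_apply, _root_.map_smul, LinearMap.smul_apply, smul_eq_mul]
  simp only [key, mul_ite, mul_zero, ite_and]
  simp only [Finset.sum_ite_eq, Finset.sum_ite_eq', Finset.mem_univ, if_true,
    Finset.sum_const_zero]
  have htr : Matrix.trace (Aᵀ * A') = ∑ j : Fin r₂, ∑ i : Fin r₁, A i j * A' i j := by
    simp [Matrix.trace, Matrix.diag, Matrix.mul_apply]
  rw [htr, Finset.mul_sum]
  simp only [Finset.mul_sum]
  rw [Finset.sum_comm]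
  exact Finset.sum_congr rfl fun _ _ => Finset.sum_congr rfl fun _ _ => by ring
end
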